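/- arXiv:2211.04156 — 2 statements merged into one kernel-verified Lean document; each statement's English description precedes it below -/
import Mathlib

section
/- Let X be a random variable on ℝ and X₁, X₂, … be i.i.d. copies of X. Suppose (aₙ), (bₙ) are real sequences with aₙ > 0 such that for every x ∈ ℝ, P(X > bₙ + aₙ x) → 0 and n·P(X > bₙ + aₙ x) → e^{−x} as n → ∞. Then for every x ∈ ℝ, P(maxᵢ≤ₙ Xᵢ ≤ bₙ + aₙ x) → exp(−e^{−x}). -/
open MeasureTheory ProbabilityTheory Filter Topology Real

lemma aux_pow_exp (p : ℕ → ℝ) (hnn : ∀ n, 0 ≤ p n) (hp0 : Tendsto p atTop (nhds 0))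
    (L : ℝ) (hp1 : Tendsto (fun n : ℕ => (n : ℝ) * p n) atTop (nhds L)) :
    Tendsto (fun n : ℕ => (1 - p n) ^ n) atTop (nhds (Real.exp (-L))) := by
  have hev : ∀ᶠ n in atTop, p n < 1/2 := hp0.eventually (gt_mem_nhds (by norm_num))
  have hg : Tendsto (fun n : ℕ => (n : ℝ) * Real.log (1 - p n)) atTop (nhds (-L)) := by
    have hlow : Tendsto (fun n : ℕ => -((n : ℝ) * p n) / (1 - p n)) atTop (nhds (-L)) := by
      have := Tendsto.div (hp1.neg) (tendsto_const_nhds.sub hp0)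
        (show (1:ℝ) - 0 ≠ 0 by norm_num)
      simpa [Pi.div_def] using this
    have hup : Tendsto (fun n : ℕ => -((n : ℝ) * p n)) atTop (nhds (-L)) := hp1.neg
    refine tendsto_of_tendsto_of_tendsto_of_le_of_le' hlow hup ?_ ?_
    · filter_upwards [hev] with n hn
      have h1p : (0:ℝ) < 1 - p n := by linarith
      have hlog : -(p n / (1 - p n)) ≤ Real.log (1 - p n) := by
        have h2 := Real.log_le_sub_one_of_pos (x := (1 - p n)⁻¹) (by positivity)
        rw [Real.log_inv] at h2
        have heq : (1 - p n)⁻¹ - 1 = p n / (1 - p n) := by field_simp; ring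
        rw [heq] at h2
        linarith
      calc -((n:ℝ) * p n) / (1 - p n) = (n:ℝ) * (-(p n / (1 - p n))) := by
            ring
        _ ≤ (n:ℝ) * Real.log (1 - p n) := by
            exact mul_le_mul_of_nonneg_left hlog (Nat.cast_nonneg n)
    · filter_upwards [hev] with n hn
      have h1p : (0:ℝ) < 1 - p n := by linarith
      have hlog : Real.log (1 - p n) ≤ -(p n) := by
        have := Real.log_le_sub_one_of_pos h1p
        linarith
      calc (n:ℝ) * Real.log (1 - p n) ≤ (n:ℝ) * (-(p n)) :=
            mul_le_mul_of_nonneg_left hlog (Nat.cast_nonneg n)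
        _ = -((n:ℝ) * p n) := by ring
  have := (Real.continuous_exp.tendsto _).comp hg
  refine Tendsto.congr' ?_ this
  filter_upwards [hev] with n hn
  have h1p : (0:ℝ) < 1 - p n := by linarith [hnn n]
  simp only [Function.comp_apply]
  rw [Real.exp_nat_mul, Real.exp_log h1p]

theorem stmt_6 {Ω : Type*} [MeasurableSpace Ω] (μ : Measure Ω) [IsProbabilityMeasure μ]
    (X : ℕ → Ω → ℝ) (hmeas : ∀ i, Measurable (X i))
    (hindep : iIndepFun X μ)
    (hident : ∀ i, μ.map (X i) = μ.map (X 0))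
    (a b : ℕ → ℝ) (ha : ∀ n, 0 < a n)
    (h0 : ∀ x : ℝ,
      Tendsto (fun n : ℕ => (μ {ω | b n + a n * x < X 0 ω}).toReal) atTop (nhds 0))
    (h1 : ∀ x : ℝ,
      Tendsto (fun n : ℕ => (n : ℝ) * (μ {ω | b n + a n * x < X 0 ω}).toReal) atTop
        (nhds (Real.exp (-x)))) :
    ∀ x : ℝ,
      Tendsto (fun n : ℕ => (μ {ω | ∀ i < n, X i ω ≤ b n + a n * x}).toReal) atTop
        (nhds (Real.exp (-Real.exp (-x)))) := by
  intro x
  set p : ℕ → ℝ := fun n => (μ {ω | b n + a n * x < X 0 ω}).toReal with hp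
  have key : ∀ n : ℕ, (μ {ω | ∀ i < n, X i ω ≤ b n + a n * x}).toReal = (1 - p n) ^ n := by
    intro n
    set c := b n + a n * x
    have hset : {ω | ∀ i < n, X i ω ≤ c} = ⋂ i ∈ Finset.range n, X i ⁻¹' Set.Iic c := by
      ext ω; simp [Set.mem_iInter]
    have hind := hindep.meas_biInter (S := Finset.range n)
      (s := fun i => X i ⁻¹' Set.Iic c)
      (fun i _ => ⟨Set.Iic c, measurableSet_Iic, rfl⟩)
    have hsame : ∀ i, μ (X i ⁻¹' Set.Iic c) = μ (X 0 ⁻¹' Set.Iic c) := by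
      intro i
      rw [← Measure.map_apply (hmeas i) measurableSet_Iic, hident i,
        Measure.map_apply (hmeas 0) measurableSet_Iic]
    have hcompl : μ (X 0 ⁻¹' Set.Iic c) = 1 - μ {ω | c < X 0 ω} := by
      have hXc : X 0 ⁻¹' Set.Iic c = {ω | c < X 0 ω}ᶜ := by
        ext ω; simp [Set.mem_Iic, not_lt]
      have hmc : MeasurableSet {ω | c < X 0 ω} := hmeas 0 measurableSet_Ioi
      rw [hXc, measure_compl hmc (measure_ne_top μ _), measure_univ]
    rw [hset, hind]
    have : ∏ i ∈ Finset.range n, μ (X i ⁻¹' Set.Iic c) = (1 - μ {ω | c < X 0 ω}) ^ n := by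
      rw [Finset.prod_congr rfl (fun i _ => (hsame i).trans hcompl), Finset.prod_const,
        Finset.card_range]
    rw [this, ENNReal.toReal_pow, ENNReal.toReal_sub_of_le prob_le_one ENNReal.one_ne_top,
      ENNReal.toReal_one]
  simp only [key]
  exact aux_pow_exp p (fun n => ENNReal.toReal_nonneg) (h0 x) _ (h1 x)
end

section
/- Let H ∈ (0,1), β > H, c > 0, with t₀, A, t̃₀ as above, and τ = 2(1−H/β). Suppose (Tₙ) satisfies Tₙ = t₀(2A² log n)^{1/(2(β−H))}(1 + εₙ) with εₙ·√(log n) → x₁ ∈ ℝ. Then (Tₙ^H √(2 log n) − c Tₙ^β − (2A² log n)^{1/τ}) / (2A² log n)^{1/τ} → 0 as n → ∞. -/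
open Real Filter Topology

theorem stmt_12 (H β c τ x₁ : ℝ) (hH0 : 0 < H) (hH1 : H < 1) (hβ : H < β) (hc : 0 < c)
    (t₀ A : ℝ)
    (ht₀ : t₀ = (H / (c * (β - H))) ^ (1 / β))
    (hA : A = ((β - H) / β) * (H / (c * (β - H))) ^ (H / β))
    (hτ : τ = 2 * (1 - H / β))
    (T ε : ℕ → ℝ)
    (hT : ∀ n : ℕ, T n = t₀ * (2 * A ^ 2 * Real.log n) ^ (1 / (2 * (β - H))) * (1 + ε n))
    (hε : Tendsto (fun n : ℕ => ε n * Real.sqrt (Real.log n)) atTop (nhds x₁)) :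
    Tendsto
      (fun n : ℕ =>
        ((T n) ^ H * Real.sqrt (2 * Real.log n) - c * (T n) ^ β
            - (2 * A ^ 2 * Real.log n) ^ (1 / τ)) /
          (2 * A ^ 2 * Real.log n) ^ (1 / τ))
      atTop (nhds 0) := by
  have hD : 0 < β - H := sub_pos.mpr hβ
  have hβ0 : 0 < β := hH0.trans hβ
  have hx : 0 < H / (c * (β - H)) := by positivity
  have ht₀pos : 0 < t₀ := by rw [ht₀]; exact Real.rpow_pos_of_pos hx _
  have hApos : 0 < A := by
    rw [hA]
    have := Real.rpow_pos_of_pos hx (H / β)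
    positivity
  set k := c * t₀ ^ β with hk
  have htβ : t₀ ^ β = H / (c * (β - H)) := by
    rw [ht₀, ← Real.rpow_mul hx.le, one_div_mul_cancel hβ0.ne', Real.rpow_one]
  have hkval : k = H / (β - H) := by
    rw [hk, htβ]; field_simp
  have hkpos : 0 < k := by rw [hkval]; positivity
  have htH : t₀ ^ H = A * (1 + k) := by
    rw [ht₀, ← Real.rpow_mul hx.le, hA, hkval, show 1 / β * H = H / β by ring]
    field_simp
    ring
  -- ε → 0
  have hsq : Tendsto (fun n : ℕ => Real.sqrt (Real.log n)) atTop atTop := by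
    have h := (tendsto_rpow_atTop (by norm_num : (0:ℝ) < 1/2)).comp
      (Real.tendsto_log_atTop.comp tendsto_natCast_atTop_atTop)
    exact h.congr fun n => (Real.sqrt_eq_rpow _).symm
  have hε0 : Tendsto ε atTop (nhds 0) := by
    have h2 := hε.mul hsq.inv_tendsto_atTop
    rw [mul_zero] at h2
    refine Tendsto.congr' ?_ h2
    filter_upwards [eventually_ge_atTop 2] with n hn
    have hn2 : (2:ℝ) ≤ (n:ℝ) := by exact_mod_cast hn
    have hl : 0 < Real.log n := Real.log_pos (by linarith)
    have hs : Real.sqrt (Real.log n) ≠ 0 := (Real.sqrt_pos.mpr hl).ne'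
    rw [Pi.inv_apply, mul_assoc, mul_inv_cancel₀ hs, mul_one]
  have hev : ∀ᶠ n : ℕ in atTop, 0 < 1 + ε n := by
    have h := hε0 (Ioo_mem_nhds (show (-1:ℝ) < 0 by norm_num) (show (0:ℝ) < 1 by norm_num))
    filter_upwards [h] with n hn
    have := hn.1
    linarith
  -- limit of simplified expression
  have h1ε : Tendsto (fun n : ℕ => 1 + ε n) atTop (nhds 1) := by
    have := tendsto_const_nhds (x := (1:ℝ)) (f := atTop (α := ℕ)) |>.add hε0
    simpa using this
  have hgH : Tendsto (fun n : ℕ => (1 + ε n) ^ H) atTop (nhds 1) := by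
    have hc1 : ContinuousAt (fun y : ℝ => y ^ H) 1 :=
      Real.continuousAt_rpow_const 1 H (Or.inl one_ne_zero)
    have := hc1.tendsto.comp h1ε
    simpa [Real.one_rpow, Function.comp_def] using this
  have hgβ : Tendsto (fun n : ℕ => (1 + ε n) ^ β) atTop (nhds 1) := by
    have hc1 : ContinuousAt (fun y : ℝ => y ^ β) 1 :=
      Real.continuousAt_rpow_const 1 β (Or.inl one_ne_zero)
    have := hc1.tendsto.comp h1ε
    simpa [Real.one_rpow, Function.comp_def] using this
  have hg : Tendsto (fun n : ℕ => (1 + k) * (1 + ε n) ^ H - k * (1 + ε n) ^ β - 1)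
      atTop (nhds 0) := by
    have h := (((tendsto_const_nhds (x := 1 + k)).mul hgH).sub
      ((tendsto_const_nhds (x := k)).mul hgβ)).sub (tendsto_const_nhds (x := (1:ℝ)))
    have hval : (1 + k) * 1 - k * 1 - 1 = (0:ℝ) := by ring
    rw [hval] at h
    exact h
  -- exponent identities
  have hτinv : 1 / τ = β / (2 * (β - H)) := by
    rw [hτ]
    rw [show (2:ℝ) * (1 - H / β) = 2 * (β - H) / β by field_simp]
    rw [one_div_div]
  have e1 : 1 / (2 * (β - H)) * H + 1 / 2 = 1 / τ := by
    rw [hτinv]; field_simp; ring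
  have e2 : 1 / (2 * (β - H)) * β = 1 / τ := by
    rw [hτinv]; ring
  refine Tendsto.congr' ?_ hg
  filter_upwards [eventually_ge_atTop 2, hev] with n hn hεn
  have hn2 : (2:ℝ) ≤ (n:ℝ) := by exact_mod_cast hn
  have hl : 0 < Real.log n := Real.log_pos (by linarith)
  set l := Real.log (n:ℝ) with hldef
  set L := 2 * A ^ 2 * l with hLdef
  have hL : 0 < L := by positivity
  have hs2 : (L ^ (1/2 : ℝ)) ^ (2:ℕ) = L := by
    rw [← Real.rpow_natCast (L ^ (1/2:ℝ)) 2, ← Real.rpow_mul hL.le]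
    norm_num
  have hsqrt : Real.sqrt (2 * l) = L ^ (1/2 : ℝ) / A := by
    have h2l : 2 * l = (L ^ (1/2:ℝ) / A) ^ 2 := by
      rw [div_pow, hs2, hLdef]; field_simp
    rw [h2l, Real.sqrt_sq (by positivity)]
  have hTH : (T n) ^ H = t₀ ^ H * L ^ (1 / (2 * (β - H)) * H) * (1 + ε n) ^ H := by
    rw [hT n,
      Real.mul_rpow (by positivity) hεn.le,
      Real.mul_rpow ht₀pos.le (Real.rpow_nonneg hL.le _),
      ← Real.rpow_mul hL.le]
  have hTβ : c * (T n) ^ β = k * (1 + ε n) ^ β * L ^ (1 / τ) := by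
    rw [hT n,
      Real.mul_rpow (by positivity) hεn.le,
      Real.mul_rpow ht₀pos.le (Real.rpow_nonneg hL.le _),
      ← Real.rpow_mul hL.le, e2, hk]
    ring
  have hnum : (T n) ^ H * Real.sqrt (2 * l) = (1 + k) * (1 + ε n) ^ H * L ^ (1 / τ) := by
    rw [hTH, hsqrt, htH, ← e1, Real.rpow_add hL]
    field_simp
  have hP : 0 < L ^ (1 / τ) := Real.rpow_pos_of_pos hL _
  show (1 + k) * (1 + ε n) ^ H - k * (1 + ε n) ^ β - 1
      = ((T n) ^ H * Real.sqrt (2 * l) - c * (T n) ^ β - L ^ (1 / τ)) / L ^ (1 / τ)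
  rw [hnum, hTβ, eq_div_iff hP.ne']
  ring
end
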